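/- Let c(n) be the coefficient of X^n in the formal power series X(1 − 2X)²/(1 − 3X + X²)² over ℝ, and let α = (1 + √5)/2. Then c(n)/(n·α^{2n}) converges, as n → ∞, to (7 − 3√5)/10. (The series X(1 − 2X)²/(1 − 3X + X²)² is the generating function, by size, of the total number of nodes on the rightmost branch over all Elena trees; hence the average number of nodes on the rightmost branch of a random Elena tree with n nodes is asymptotic to (5 − √5)n/10.) -/

import Mathlib

open PowerSeries Filter

noncomputable def ddAux : ℕ → ℝ := fun n =>
  ((19 * Real.sqrt 5 - 35) / 50 + (7 - 3 * Real.sqrt 5) / 10 * (n + 1)) *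
      ((3 + Real.sqrt 5) / 2) ^ n +
    (-(35 + 19 * Real.sqrt 5) / 50 + (7 + 3 * Real.sqrt 5) / 10 * (n + 1)) *
      ((3 - Real.sqrt 5) / 2) ^ n

lemma rec_root (r A B : ℝ) (hr : r ^ 2 - 3 * r + 1 = 0) (m : ℕ) :
    (A + B * ((m : ℝ) + 5)) * r ^ (m + 4) - 6 * ((A + B * ((m : ℝ) + 4)) * r ^ (m + 3))
      + 11 * ((A + B * ((m : ℝ) + 3)) * r ^ (m + 2))
      - 6 * ((A + B * ((m : ℝ) + 2)) * r ^ (m + 1))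
      + (A + B * ((m : ℝ) + 1)) * r ^ m = 0 := by
  linear_combination (r ^ m * ((A + B * ((m : ℝ) + 1)) * (r ^ 2 - 3 * r + 1)
    + 2 * B * r * (2 * r - 3))) * hr

lemma h5 : Real.sqrt 5 ^ 2 = 5 := Real.sq_sqrt (by norm_num)

lemma key : ((1 : ℝ⟦X⟧) - 3 * X + X ^ 2) ^ 2 * PowerSeries.mk ddAux
    = X * (1 - 2 * X) ^ 2 := by
  have expand : ((1 : ℝ⟦X⟧) - 3 * X + X ^ 2) ^ 2 * PowerSeries.mk ddAux
      = PowerSeries.mk ddAux - 6 * (X ^ 1 * PowerSeries.mk ddAux)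
        + 11 * (X ^ 2 * PowerSeries.mk ddAux)
        - 6 * (X ^ 3 * PowerSeries.mk ddAux)
        + X ^ 4 * PowerSeries.mk ddAux := by
    ring
  have expandQ : (X : ℝ⟦X⟧) * (1 - 2 * X) ^ 2
      = X ^ 1 - 4 * X ^ 2 + 4 * X ^ 3 := by
    ring
  rw [expand, expandQ]
  ext n
  simp only [show ((6:ℝ⟦X⟧)) = C (6:ℝ) from (map_ofNat _ _).symm,
    show ((11:ℝ⟦X⟧)) = C (11:ℝ) from (map_ofNat _ _).symm,
    show ((4:ℝ⟦X⟧)) = C (4:ℝ) from (map_ofNat _ _).symm,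
    map_add, map_sub, coeff_C_mul, coeff_X_pow_mul', coeff_mk, coeff_X_pow]
  have ha : ((3 + Real.sqrt 5) / 2) ^ 2 - 3 * ((3 + Real.sqrt 5) / 2) + 1 = 0 := by
    linear_combination h5 / 4
  have hb : ((3 - Real.sqrt 5) / 2) ^ 2 - 3 * ((3 - Real.sqrt 5) / 2) + 1 = 0 := by
    linear_combination h5 / 4
  match n with
  | 0 => norm_num [ddAux]; try linear_combination (0:ℝ) * h5
  | 1 => norm_num [ddAux]; linear_combination (-11 / 50 : ℝ) * h5
  | 2 => norm_num [ddAux]; linear_combination (23 / 50 : ℝ) * h5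
  | 3 => norm_num [ddAux]; linear_combination (181 / 200 - 41 / 200 * Real.sqrt 5 ^ 2) * h5
  | (m + 4) =>
    have e1 := rec_root ((3 + Real.sqrt 5) / 2)
      ((19 * Real.sqrt 5 - 35) / 50) ((7 - 3 * Real.sqrt 5) / 10) ha m
    have e2 := rec_root ((3 - Real.sqrt 5) / 2)
      (-(35 + 19 * Real.sqrt 5) / 50) ((7 + 3 * Real.sqrt 5) / 10) hb m
    have h1 : (1:ℕ) ≤ m + 4 := by omega
    have h2' : (2:ℕ) ≤ m + 4 := by omega
    have h3' : (3:ℕ) ≤ m + 4 := by omega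
    have h4' : (4:ℕ) ≤ m + 4 := by omega
    rw [if_pos h1, if_pos h2', if_pos h3', if_pos h4']
    have : m + 4 - 1 = m + 3 := by omega
    rw [this]
    have : m + 4 - 2 = m + 2 := by omega
    rw [this]
    have : m + 4 - 3 = m + 1 := by omega
    rw [this]
    have : m + 4 - 4 = m := by omega
    rw [this]
    have hn1 : m + 4 ≠ 1 := by omega
    have hn2 : m + 4 ≠ 2 := by omega
    have hn3 : m + 4 ≠ 3 := by omega
    rw [if_neg hn1, if_neg hn2, if_neg hn3]
    simp only [ddAux]
    push_cast
    linarith [e1, e2]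

/-- Let `c(n)` be the coefficient of `Xⁿ` in `X(1 − 2X)²/(1 − 3X + X²)²` over
`ℝ` and `α = (1 + √5)/2`.  Then `c(n)/(n·α^(2n)) → (7 − 3√5)/10`. -/
theorem avg_rightmost_branch :
    Filter.Tendsto
      (fun n : ℕ =>
        PowerSeries.coeff (R := ℝ) n
            (PowerSeries.X * (1 - 2 * PowerSeries.X) ^ 2 *
              (((1 : PowerSeries ℝ) - 3 * PowerSeries.X + PowerSeries.X ^ 2)⁻¹) ^ 2) /
          ((n : ℝ) * ((1 + Real.sqrt 5) / 2) ^ (2 * n)))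
      Filter.atTop (nhds ((7 - 3 * Real.sqrt 5) / 10)) := by
  have hP : constantCoeff ((1 : ℝ⟦X⟧) - 3 * X + X ^ 2) ≠ 0 := by simp
  have hinv : ((1 : ℝ⟦X⟧) - 3 * X + X ^ 2) * ((1 : ℝ⟦X⟧) - 3 * X + X ^ 2)⁻¹ = 1 :=
    PowerSeries.mul_inv_cancel _ hP
  have hser : (X : ℝ⟦X⟧) * (1 - 2 * X) ^ 2 * (((1 : ℝ⟦X⟧) - 3 * X + X ^ 2)⁻¹) ^ 2
      = PowerSeries.mk ddAux := by
    rw [← key]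
    calc ((1 : ℝ⟦X⟧) - 3 * X + X ^ 2) ^ 2 * PowerSeries.mk ddAux *
          (((1 : ℝ⟦X⟧) - 3 * X + X ^ 2)⁻¹) ^ 2
        = (((1 : ℝ⟦X⟧) - 3 * X + X ^ 2) * ((1 : ℝ⟦X⟧) - 3 * X + X ^ 2)⁻¹) ^ 2 *
            PowerSeries.mk ddAux := by ring
      _ = PowerSeries.mk ddAux := by rw [hinv, one_pow, one_mul]
  simp only [hser, coeff_mk]
  set s : ℝ := Real.sqrt 5 with hs
  have h5' : s ^ 2 = 5 := h5
  have hsnn : 0 ≤ s := Real.sqrt_nonneg 5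
  have hs2 : 2 < s := by nlinarith
  have hs3 : s < 3 := by nlinarith
  set a : ℝ := (3 + s) / 2 with ha
  set b : ℝ := (3 - s) / 2 with hb
  have hapos : 0 < a := by rw [ha]; linarith
  have hbpos : 0 < b := by rw [hb]; linarith
  have hba : b < a := by rw [ha, hb]; linarith
  set q : ℝ := b / a with hq
  have hq0 : 0 ≤ q := le_of_lt (div_pos hbpos hapos)
  have hq1 : q < 1 := (div_lt_one hapos).mpr hba
  set A : ℝ := (19 * s - 35) / 50 with hA
  set B : ℝ := (7 - 3 * s) / 10 with hB
  set C' : ℝ := -(35 + 19 * s) / 50 with hC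
  set D : ℝ := (7 + 3 * s) / 10 with hD
  have l1 : Tendsto (fun n : ℕ => 1 / (n : ℝ)) atTop (nhds 0) :=
    tendsto_one_div_atTop_nhds_zero_nat
  have l2 : Tendsto (fun n : ℕ => q ^ n) atTop (nhds 0) :=
    tendsto_pow_atTop_nhds_zero_of_lt_one hq0 hq1
  have lg : Tendsto (fun n : ℕ =>
      (A + B) * (1 / (n : ℝ)) + B + ((C' + D) * (1 / (n : ℝ)) + D) * q ^ n)
      atTop (nhds ((A + B) * 0 + B + ((C' + D) * 0 + D) * 0)) :=
    (((l1.const_mul _).add tendsto_const_nhds).add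
      (((l1.const_mul _).add tendsto_const_nhds).mul l2))
  have hBval : (A + B) * 0 + B + ((C' + D) * 0 + D) * 0 = (7 - 3 * s) / 10 := by
    rw [hB]; ring
  rw [hBval] at lg
  refine lg.congr' ?_
  filter_upwards [eventually_ge_atTop 1] with n hn
  have hn0 : (n : ℝ) ≠ 0 := by
    have : 0 < n := hn
    positivity
  have ha0 : a ≠ 0 := ne_of_gt hapos
  have han : a ^ n ≠ 0 := pow_ne_zero _ ha0
  have hpow : ((1 + s) / 2) ^ (2 * n) = a ^ n := by
    rw [pow_mul, show ((1 + s) / 2) ^ 2 = a by rw [ha]; linear_combination h5' / 4]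
  simp only [ddAux, ← hs, hpow]
  rw [hq, div_pow, hA, hB, hC, hD, ha, hb]
  field_simp
  ring
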